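/- Let Ω ⊂ ℝ^d be compact, X¹,…,X^N ∈ Ω, and T^{(N)}_ε f(x) = Σ_j k^{(N)}_ε(x,X^j) f(X^j)/Σ_j k^{(N)}_ε(x,X^j) the empirical diffusion map operator. Then for every f with ‖f‖_∞ ≤ 1 and all x, x' ∈ Ω: (a) |T^{(N)}_ε f(x)| ≤ 1, and (b) |T^{(N)}_ε f(x) - T^{(N)}_ε f(x')| ≤ (L/ε)|x - x'| e^{(L/(2ε))|x-x'|}, where L depends only on the diameter of Ω. Hence the family {T^{(N)}_ε f : ‖f‖_∞ ≤ 1, N ∈ ℕ} is uniformly bounded and equicontinuous. -/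

import Mathlib

open Finset

noncomputable section

variable {d : ℕ}

/-- The Gaussian kernel `g_ε(x,y) = e^{-|x-y|²/(4ε)}`. -/
def gker (ε : ℝ) (x y : EuclideanSpace ℝ (Fin d)) : ℝ :=
  Real.exp (-‖x - y‖ ^ 2 / (4 * ε))

/-- The symmetrically normalized empirical kernel `k^{(N)}_ε`. -/
def kN {N : ℕ} (ε : ℝ) (X : Fin N → EuclideanSpace ℝ (Fin d))
    (x y : EuclideanSpace ℝ (Fin d)) : ℝ :=
  gker ε x y /
    (Real.sqrt (∑ j, gker ε x (X j)) * Real.sqrt (∑ j, gker ε y (X j)))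

/-- The empirical diffusion map operator
`T^{(N)}_ε f(x) = Σ_j k^{(N)}_ε(x,X^j) f(X^j) / Σ_j k^{(N)}_ε(x,X^j)`. -/
def TNop {N : ℕ} (ε : ℝ) (X : Fin N → EuclideanSpace ℝ (Fin d))
    (f : EuclideanSpace ℝ (Fin d) → ℝ) (x : EuclideanSpace ℝ (Fin d)) : ℝ :=
  (∑ j, kN ε X x (X j) * f (X j)) / (∑ j, kN ε X x (X j))

lemma gker_pos (ε : ℝ) (x y : EuclideanSpace ℝ (Fin d)) : 0 < gker ε x y :=
  Real.exp_pos _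

/-- Ratio bound for the Gaussian kernel on a bounded set. -/
lemma gker_ratio {Ω : Set (EuclideanSpace ℝ (Fin d))} (hΩ : IsCompact Ω)
    {ε : ℝ} (hε : 0 < ε) {x x' y : EuclideanSpace ℝ (Fin d)}
    (hx : x ∈ Ω) (hx' : x' ∈ Ω) (hy : y ∈ Ω) :
    gker ε x y ≤ Real.exp (Metric.diam Ω / (2 * ε) * ‖x - x'‖) * gker ε x' y := by
  have hb := hΩ.isBounded
  set D := Metric.diam Ω with hD
  have h1 : ‖x - y‖ ≤ D := by
    rw [← dist_eq_norm]; exact Metric.dist_le_diam_of_mem hb hx hy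
  have h2 : ‖x' - y‖ ≤ D := by
    rw [← dist_eq_norm]; exact Metric.dist_le_diam_of_mem hb hx' hy
  have h3 : ‖x' - y‖ ≤ ‖x - x'‖ + ‖x - y‖ := by
    have := dist_triangle x' x y
    simpa [dist_eq_norm, norm_sub_rev x' x] using this
  have hnn1 : (0:ℝ) ≤ ‖x' - y‖ := norm_nonneg _
  have hnn2 : (0:ℝ) ≤ ‖x - y‖ := norm_nonneg _
  have hnn3 : (0:ℝ) ≤ ‖x - x'‖ := norm_nonneg _
  have key : ‖x' - y‖ ^ 2 - ‖x - y‖ ^ 2 ≤ 2 * D * ‖x - x'‖ := by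
    rcases le_or_gt ‖x' - y‖ ‖x - y‖ with h | h
    · nlinarith
    · nlinarith
  unfold gker
  rw [← Real.exp_add, Real.exp_le_exp]
  have h4 : (0:ℝ) < 4 * ε := by linarith
  have heq : D / (2 * ε) * ‖x - x'‖ = (2 * D * ‖x - x'‖) / (4 * ε) := by
    field_simp; ring
  rw [heq]
  rw [← add_div] at *
  rw [div_le_div_iff₀ h4 h4]  -- maybe not; fallback below
  nlinarith

/-- A weighted average of values bounded by 1 is bounded by 1. -/
lemma weighted_avg_bound {N : ℕ} (hN : 0 < N) (a v : Fin N → ℝ)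
    (ha : ∀ j, 0 < a j) (hv : ∀ j, |v j| ≤ 1) :
    |(∑ j, a j * v j) / (∑ j, a j)| ≤ 1 := by
  haveI : Nonempty (Fin N) := ⟨⟨0, hN⟩⟩
  have hA : 0 < ∑ j, a j := Finset.sum_pos (fun j _ => ha j) Finset.univ_nonempty
  rw [abs_div, abs_of_pos hA, div_le_one hA]
  calc |∑ j, a j * v j| ≤ ∑ j, |a j * v j| := Finset.abs_sum_le_sum_abs _ _
    _ ≤ ∑ j, a j := by
        apply Finset.sum_le_sum
        intro j _
        rw [abs_mul, abs_of_pos (ha j)]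
        calc a j * |v j| ≤ a j * 1 := by
              exact mul_le_mul_of_nonneg_left (hv j) (ha j).le
          _ = a j := mul_one _

/-- Perturbation bound for weighted averages with comparable weights. -/
lemma weighted_avg_diff {N : ℕ} (hN : 0 < N) (a b v : Fin N → ℝ) {R : ℝ} (hR : 1 ≤ R)
    (ha : ∀ j, 0 < a j) (hb : ∀ j, 0 < b j)
    (hab : ∀ j, a j ≤ R * b j) (hba : ∀ j, b j ≤ R * a j)
    (hv : ∀ j, |v j| ≤ 1) :
    |(∑ j, a j * v j) / (∑ j, a j) - (∑ j, b j * v j) / (∑ j, b j)| ≤ 2 * (R - 1) := by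
  haveI : Nonempty (Fin N) := ⟨⟨0, hN⟩⟩
  have hA : 0 < ∑ j, a j := Finset.sum_pos (fun j _ => ha j) Finset.univ_nonempty
  have hB : 0 < ∑ j, b j := Finset.sum_pos (fun j _ => hb j) Finset.univ_nonempty
  set c := (∑ j, b j * v j) / (∑ j, b j) with hc
  have hcle : |c| ≤ 1 := weighted_avg_bound hN b v hb hv
  have hsum0 : ∑ j, b j * (v j - c) = 0 := by
    have : (∑ j, b j * v j) = c * (∑ j, b j) := by
      rw [hc, div_mul_cancel₀ _ hB.ne']
    simp only [mul_sub, Finset.sum_sub_distrib]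
    rw [this, ← Finset.sum_mul]
    ring
  have hnum : (∑ j, a j * v j) / (∑ j, a j) - c = (∑ j, a j * (v j - c)) / (∑ j, a j) := by
    have e : (∑ j, a j * (v j - c)) = (∑ j, a j * v j) - (∑ j, a j) * c := by
      simp only [mul_sub, Finset.sum_sub_distrib, Finset.sum_mul]
    rw [e, sub_div, mul_comm, mul_div_assoc, div_self hA.ne', mul_one]
  rw [hnum]
  have hdiff : (∑ j, a j * (v j - c)) = ∑ j, (a j - b j) * (v j - c) := by
    simp only [sub_mul, Finset.sum_sub_distrib, hsum0]
    ring
  rw [hdiff, abs_div, abs_of_pos hA, div_le_iff₀ hA]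
  calc |∑ j, (a j - b j) * (v j - c)| ≤ ∑ j, |(a j - b j) * (v j - c)| :=
        Finset.abs_sum_le_sum_abs _ _
    _ ≤ ∑ j, 2 * (R - 1) * a j := by
        apply Finset.sum_le_sum
        intro j _
        rw [abs_mul]
        have h1 : |a j - b j| ≤ (R - 1) * a j := by
          rw [abs_le]
          constructor
          · have := hba j; linarith
          · have h := hab j
            have hbj := (hb j).le
            have haj := (ha j).le
            nlinarith [sq_nonneg (R - 1), mul_nonneg (sq_nonneg (R - 1)) hbj]
        have h2 : |v j - c| ≤ 2 := by
          calc |v j - c| ≤ |v j| + |c| := abs_sub _ _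
            _ ≤ 2 := by linarith [hv j]
        calc |a j - b j| * |v j - c| ≤ ((R - 1) * a j) * 2 := by
              exact mul_le_mul h1 h2 (abs_nonneg _)
                (mul_nonneg (by linarith) (ha j).le)
          _ = 2 * (R - 1) * a j := by ring
    _ = 2 * (R - 1) * ∑ j, a j := by rw [← Finset.mul_sum]

/-- `TNop` as a simple weighted average. -/
lemma TNop_eq {N : ℕ} (hN : 0 < N) (ε : ℝ) (X : Fin N → EuclideanSpace ℝ (Fin d))
    (f : EuclideanSpace ℝ (Fin d) → ℝ) (x : EuclideanSpace ℝ (Fin d)) :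
    TNop ε X f x =
      (∑ j, (gker ε x (X j) / Real.sqrt (∑ i, gker ε (X j) (X i))) * f (X j)) /
        (∑ j, gker ε x (X j) / Real.sqrt (∑ i, gker ε (X j) (X i))) := by
  haveI : Nonempty (Fin N) := ⟨⟨0, hN⟩⟩
  have hs : 0 < Real.sqrt (∑ j, gker ε x (X j)) :=
    Real.sqrt_pos.mpr (Finset.sum_pos (fun i _ => gker_pos _ _ _) Finset.univ_nonempty)
  unfold TNop kN
  have e1 : ∀ j : Fin N,
      gker ε x (X j) / (Real.sqrt (∑ i, gker ε x (X i)) * Real.sqrt (∑ i, gker ε (X j) (X i)))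
        * f (X j)
      = gker ε x (X j) / Real.sqrt (∑ i, gker ε (X j) (X i)) * f (X j)
          / Real.sqrt (∑ i, gker ε x (X i)) := by
    intro j
    rw [mul_comm (Real.sqrt (∑ i, gker ε x (X i))), ← div_div,
      div_mul_eq_mul_div (gker ε x (X j) / Real.sqrt (∑ i, gker ε (X j) (X i)))
        (Real.sqrt (∑ i, gker ε x (X i))) (f (X j))]
  have e2 : ∀ j : Fin N,
      gker ε x (X j) / (Real.sqrt (∑ i, gker ε x (X i)) * Real.sqrt (∑ i, gker ε (X j) (X i)))
      = gker ε x (X j) / Real.sqrt (∑ i, gker ε (X j) (X i))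
          / Real.sqrt (∑ i, gker ε x (X i)) := by
    intro j
    rw [div_div, mul_comm]
  rw [Finset.sum_congr rfl (fun j _ => e1 j), Finset.sum_congr rfl (fun j _ => e2 j),
    ← Finset.sum_div, ← Finset.sum_div, div_div_div_comm, div_self hs.ne', div_one]

/-- on a compact set `Ω` the empirical diffusion map operators are
uniformly bounded and equicontinuous: for every `f` with `‖f‖_∞ ≤ 1`,
(a) `|T^{(N)}_ε f(x)| ≤ 1` and (b)
`|T^{(N)}_ε f(x) - T^{(N)}_ε f(x')| ≤ (L/ε)|x-x'| e^{(L/(2ε))|x-x'|}`,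
where `L` is the diameter of `Ω`. -/
theorem empirical_operator_uniformly_bounded_equicontinuous
    (Ω : Set (EuclideanSpace ℝ (Fin d))) (hΩ : IsCompact Ω)
    (ε : ℝ) (hε : 0 < ε) (L : ℝ) (hL : L = Metric.diam Ω) :
    ∀ (N : ℕ), 0 < N → ∀ X : Fin N → EuclideanSpace ℝ (Fin d), (∀ i, X i ∈ Ω) →
      ∀ f : EuclideanSpace ℝ (Fin d) → ℝ, (∀ y, |f y| ≤ 1) →
        ∀ x ∈ Ω, |TNop ε X f x| ≤ 1 ∧
          ∀ x' ∈ Ω, |TNop ε X f x - TNop ε X f x'|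
            ≤ (L / ε) * ‖x - x'‖ * Real.exp ((L / (2 * ε)) * ‖x - x'‖) := by
  intro N hN X hX f hf x hx
  haveI : Nonempty (Fin N) := ⟨⟨0, hN⟩⟩
  have hLnn : 0 ≤ L := hL ▸ Metric.diam_nonneg
  set w : Fin N → ℝ := fun j => Real.sqrt (∑ i, gker ε (X j) (X i)) with hw
  have hwpos : ∀ j, 0 < w j := fun j =>
    Real.sqrt_pos.mpr (Finset.sum_pos (fun i _ => gker_pos _ _ _) Finset.univ_nonempty)
  have key : ∀ z : EuclideanSpace ℝ (Fin d),
      TNop ε X f z = (∑ j, (gker ε z (X j) / w j) * f (X j)) / (∑ j, gker ε z (X j) / w j) :=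
    fun z => TNop_eq hN ε X f z
  constructor
  · rw [key x]
    exact weighted_avg_bound hN _ _ (fun j => div_pos (gker_pos _ _ _) (hwpos j))
      (fun j => hf _)
  · intro x' hx'
    rw [key x, key x']
    set t := L / (2 * ε) * ‖x - x'‖ with htdef
    have ht : 0 ≤ t := by positivity
    have hR : 1 ≤ Real.exp t := Real.one_le_exp ht
    have hab : ∀ j, gker ε x (X j) / w j ≤ Real.exp t * (gker ε x' (X j) / w j) := by
      intro j
      have hg := gker_ratio hΩ hε hx hx' (hX j)
      rw [← hL] at hg
      rw [← mul_div_assoc]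
      exact div_le_div_of_nonneg_right hg (hwpos j).le
    have hba : ∀ j, gker ε x' (X j) / w j ≤ Real.exp t * (gker ε x (X j) / w j) := by
      intro j
      have hg := gker_ratio hΩ hε hx' hx (hX j)
      rw [← hL, norm_sub_rev x' x] at hg
      rw [← mul_div_assoc]
      exact div_le_div_of_nonneg_right hg (hwpos j).le
    have main := weighted_avg_diff hN (fun j => gker ε x (X j) / w j)
      (fun j => gker ε x' (X j) / w j) (fun j => f (X j)) hR
      (fun j => div_pos (gker_pos _ _ _) (hwpos j))
      (fun j => div_pos (gker_pos _ _ _) (hwpos j))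
      hab hba (fun j => hf (X j))
    refine main.trans ?_
    have hmul : Real.exp (-t) * Real.exp t = 1 := by
      rw [← Real.exp_add]; simp
    have h1 : Real.exp t - 1 ≤ t * Real.exp t := by
      nlinarith [Real.add_one_le_exp (-t), Real.exp_pos t, Real.exp_pos (-t)]
    have h2 : (L / ε) * ‖x - x'‖ = 2 * t := by
      rw [htdef]; field_simp
    rw [h2]
    nlinarith [Real.exp_pos t]

end
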